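/- (Combinatorial core of Lemma 4.6) Let ρ be a face of ℕA and let α ∈ ℕρ be such that α ∉ ℕσ for every face σ of ℕA with σ ⊊ ρ. Let β ∈ ℤ^d satisfy β ∉ ℕA + ℤρ, while β ∈ ℕA + ℤμ for every face μ of ℕA with ρ ⊊ μ. Then there exists M ∈ ℕ such that for all integers m ≥ M and every face μ of ℕA, one has β − m·α ∈ ℕA + ℤμ if and only if ρ ⊊ μ. -/

import Mathlib

/-- The semigroup `ℕA`: the additive submonoid of `ℤ^d` generated by the
columns `a 1, …, a n` of the matrix `A`. -/
def semigroupNA (d n : ℕ) (a : Fin n → (Fin d → ℤ)) : AddSubmonoid (Fin d → ℤ) :=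
  AddSubmonoid.closure (Set.range a)

/-- The submonoid `ℕτ` of `ℤ^d` generated by the columns `a i` for `i ∈ τ`. -/
def monoidNface (d n : ℕ) (a : Fin n → (Fin d → ℤ)) (τ : Set (Fin n)) :
    AddSubmonoid (Fin d → ℤ) :=
  AddSubmonoid.closure (a '' τ)

/-- The subgroup `ℤτ` of `ℤ^d` generated by the columns `a i` for `i ∈ τ`. -/
def groupZface (d n : ℕ) (a : Fin n → (Fin d → ℤ)) (τ : Set (Fin n)) :
    AddSubgroup (Fin d → ℤ) :=
  AddSubgroup.closure (a '' τ)

/-- The set `ℕA + ℤτ = {u + v : u ∈ ℕA, v ∈ ℤτ}`. -/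
def NAplusZ (d n : ℕ) (a : Fin n → (Fin d → ℤ)) (τ : Set (Fin n)) :
    Set (Fin d → ℤ) :=
  {x | ∃ u ∈ semigroupNA d n a, ∃ v ∈ groupZface d n a τ, x = u + v}

/-- `τ ⊆ {1,…,n}` is a face of `ℕA` if there is a `ℤ`-linear functional `f` on `ℤ^d`
that is nonnegative on all columns of `A` and `τ = {i : f (a i) = 0}`. -/
def IsFace (d n : ℕ) (a : Fin n → (Fin d → ℤ)) (τ : Set (Fin n)) : Prop :=
  ∃ f : (Fin d → ℤ) →ₗ[ℤ] ℤ, (∀ i, 0 ≤ f (a i)) ∧ τ = {i | f (a i) = 0}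

section helpers

variable {d n : ℕ} {a : Fin n → (Fin d → ℤ)}

lemma nonneg_on_NA (f : (Fin d → ℤ) →ₗ[ℤ] ℤ) (hf : ∀ i, 0 ≤ f (a i))
    {u : Fin d → ℤ} (hu : u ∈ semigroupNA d n a) : 0 ≤ f u := by
  induction hu using AddSubmonoid.closure_induction with
  | mem x hx => obtain ⟨i, rfl⟩ := hx; exact hf i
  | zero => simp
  | add x y _ _ hx hy => rw [map_add]; omega

lemma zero_on_Zface (f : (Fin d → ℤ) →ₗ[ℤ] ℤ) {μ : Set (Fin n)}
    (hf : ∀ i ∈ μ, f (a i) = 0)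
    {v : Fin d → ℤ} (hv : v ∈ groupZface d n a μ) : f v = 0 := by
  induction hv using AddSubgroup.closure_induction with
  | mem x hx => obtain ⟨i, hi, rfl⟩ := hx; exact hf i hi
  | zero => simp
  | add x y _ _ hx hy => rw [map_add]; omega
  | neg x _ hx => rw [map_neg]; omega

lemma alpha_to_smaller_face (f : (Fin d → ℤ) →ₗ[ℤ] ℤ) {ρ μ : Set (Fin n)}
    (hf : ∀ i, 0 ≤ f (a i)) (hμ : μ = {i | f (a i) = 0})
    {α : Fin d → ℤ} (hα : α ∈ monoidNface d n a ρ) :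
    0 ≤ f α ∧ (f α = 0 → α ∈ monoidNface d n a (ρ ∩ μ)) := by
  induction hα using AddSubmonoid.closure_induction with
  | mem x hx =>
    obtain ⟨i, hi, rfl⟩ := hx
    refine ⟨hf i, fun h0 => AddSubmonoid.subset_closure ⟨i, ⟨hi, ?_⟩, rfl⟩⟩
    rw [hμ]; exact h0
  | zero => exact ⟨by simp, fun _ => zero_mem _⟩
  | add x y _ _ hx hy =>
    refine ⟨by rw [map_add]; omega, fun h0 => ?_⟩
    rw [map_add] at h0
    exact add_mem (hx.2 (by omega)) (hy.2 (by omega))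

lemma key_per_face
    (d n : ℕ) (a : Fin n → (Fin d → ℤ))
    (ρ : Set (Fin n)) (hρ : IsFace d n a ρ)
    (α : Fin d → ℤ) (hα : α ∈ monoidNface d n a ρ)
    (hint : ∀ σ : Set (Fin n), IsFace d n a σ → σ ⊂ ρ → α ∉ monoidNface d n a σ)
    (β : Fin d → ℤ) (hβρ : β ∉ NAplusZ d n a ρ)
    (hβ : ∀ μ : Set (Fin n), IsFace d n a μ → ρ ⊂ μ → β ∈ NAplusZ d n a μ)
    (μ : Set (Fin n)) :
    ∃ M : ℕ, ∀ m : ℤ, (M : ℤ) ≤ m → IsFace d n a μ →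
      (β - m • α ∈ NAplusZ d n a μ ↔ ρ ⊂ μ) := by
  by_cases hface : IsFace d n a μ
  · by_cases hlt : ρ ⊂ μ
    · -- β - m • α ∈ NAplusZ always
      refine ⟨0, fun m _ _ => ⟨fun _ => hlt, fun _ => ?_⟩⟩
      obtain ⟨u, hu, v, hv, hx⟩ := hβ μ hface hlt
      have hαμ : α ∈ groupZface d n a μ := by
        have : monoidNface d n a ρ ≤ (groupZface d n a μ).toAddSubmonoid := by
          apply AddSubmonoid.closure_le.mpr
          intro x hx
          obtain ⟨i, hi, rfl⟩ := hx
          exact AddSubgroup.subset_closure ⟨i, hlt.1 hi, rfl⟩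
        exact this hα
      exact ⟨u, hu, v - m • α, sub_mem hv (zsmul_mem hαμ m), by
        rw [hx]; abel⟩
    · by_cases hsub : ρ ⊆ μ
      · -- μ = ρ
        have hμρ : μ = ρ := by
          by_contra h
          exact hlt ⟨hsub, fun hx => h (le_antisymm hx hsub)⟩
        subst hμρ
        refine ⟨0, fun m _ _ => ⟨fun hmem => ?_, fun h => absurd h hlt⟩⟩
        obtain ⟨u, hu, v, hv, hx⟩ := hmem
        have hαρ : α ∈ groupZface d n a μ := by
          have : monoidNface d n a μ ≤ (groupZface d n a μ).toAddSubmonoid := by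
            apply AddSubmonoid.closure_le.mpr
            intro x hx; exact AddSubgroup.subset_closure hx
          exact this hα
        exact absurd (show β ∈ NAplusZ d n a μ from
          ⟨u, hu, v + m • α, add_mem hv (zsmul_mem hαρ m), by
            have : β = (β - m • α) + m • α := by abel
            rw [this, hx]; abel⟩) hβρ
      · -- ρ ⊄ μ : use the functional
        obtain ⟨f, hf, hfμ⟩ := hface
        have hkey := alpha_to_smaller_face f hf hfμ hα
        have hfα : 0 < f α := by
          rcases lt_or_eq_of_le hkey.1 with h | h
          · exact h
          · exfalso
            have hαmem := hkey.2 h.symm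
            obtain ⟨g, hg, hgρ⟩ := hρ
            refine hint (ρ ∩ μ) ⟨f + g, fun i => ?_, ?_⟩ ?_ hαmem
            · simp only [LinearMap.add_apply]
              have := hf i; have := hg i; omega
            · ext i
              simp only [Set.mem_inter_iff, Set.mem_setOf_eq, LinearMap.add_apply]
              rw [hfμ, hgρ]
              simp only [Set.mem_setOf_eq]
              have := hf i; have := hg i
              constructor <;> intro h <;> omega
            · refine ⟨Set.inter_subset_left, fun hsub' => hsub fun i hi => ?_⟩
              exact (hsub' hi).2
        refine ⟨(f β).toNat + 1, fun m hm _ => ⟨fun hmem => ?_, fun h => absurd h hlt⟩⟩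
        obtain ⟨u, hu, v, hv, hx⟩ := hmem
        have h1 : 0 ≤ f u := nonneg_on_NA f hf hu
        have h2 : f v = 0 := zero_on_Zface f (fun i hi => by
          rw [hfμ] at hi; exact hi) hv
        have h3 : f (β - m • α) = f β - m * f α := by
          rw [map_sub, map_zsmul, smul_eq_mul]
        have h4 : f (β - m • α) = f u + f v := by rw [hx, map_add]
        have hm' : (f β).toNat + 1 ≤ m := by exact_mod_cast hm
        have : f β < m * f α := by nlinarith [Int.self_le_toNat (f β)]
        omega
  · exact ⟨0, fun m _ hf => absurd hf hface⟩

end helpers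

/-- combinatorial core of Lemma 4.6: if `α ∈ ℕρ` lies on no proper face
of the face `ρ`, `β ∉ ℕA + ℤρ`, and `β ∈ ℕA + ℤμ` for every face `μ` strictly
containing `ρ`, then for all sufficiently large integers `m`, the faces `μ` with
`β - m • α ∈ ℕA + ℤμ` are exactly those strictly containing `ρ`. -/
theorem nabla_eventually_eq_strict_star
    (d n : ℕ) (hd : 0 < d) (hn : 0 < n) (a : Fin n → (Fin d → ℤ))
    (ρ : Set (Fin n)) (hρ : IsFace d n a ρ)
    (α : Fin d → ℤ) (hα : α ∈ monoidNface d n a ρ)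
    (hint : ∀ σ : Set (Fin n), IsFace d n a σ → σ ⊂ ρ → α ∉ monoidNface d n a σ)
    (β : Fin d → ℤ) (hβρ : β ∉ NAplusZ d n a ρ)
    (hβ : ∀ μ : Set (Fin n), IsFace d n a μ → ρ ⊂ μ → β ∈ NAplusZ d n a μ) :
    ∃ M : ℕ, ∀ m : ℤ, (M : ℤ) ≤ m → ∀ μ : Set (Fin n), IsFace d n a μ →
      (β - m • α ∈ NAplusZ d n a μ ↔ ρ ⊂ μ) := by
  classical
  have key := fun μ => key_per_face d n a ρ hρ α hα hint β hβρ hβ μ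
  choose g hg using key
  refine ⟨Finset.univ.sup g, fun m hm μ hface => ?_⟩
  have hgμ : (g μ : ℤ) ≤ m := by
    have : g μ ≤ Finset.univ.sup g := Finset.le_sup (Finset.mem_univ μ)
    have := Int.ofNat_le.mpr this
    omega
  exact hg μ m hgμ hface
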